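/- Let ε_ℓ := |||u − U_{ℓ+1}|||² and suppose for some 0 < ε < 1, 0 < q_est < 1, C_est > 0, C_rel > 0, λ > 0 with λ·C_est ≤ 1, the inequalities (i) |||u − U_{ℓ+1}|||² + |||U_{ℓ+1} − U_ℓ|||² ≤ (1−ε)^{-1}|||u − U_ℓ|||², (ii) η_{ℓ+1}² ≤ q_est·η_ℓ² + C_est·|||U_{ℓ+1} − U_ℓ|||², and (iii) |||u − U_ℓ||| ≤ C_rel·η_ℓ hold for all ℓ ≥ ℓ₀. Then, provided ε and an auxiliary δ > 0 are chosen such that q_est + C_rel²δ < 1 and (1−ε)^{-1} − δλ < 1, the quantity Δ_ℓ² := |||u − U_ℓ|||² + λη_ℓ² satisfies Δ_{ℓ+1} ≤ q_lin·Δ_ℓ for all ℓ ≥ ℓ₀, where q_lin² := max{(1−ε)^{-1} − δλ, q_est + C_rel²δ} < 1. -/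
import Mathlib


open Filter Topology

/-- Core contraction step of the linear convergence theorem. -/
theorem stmt12 {V : Type*} [NormedAddCommGroup V]
    (u : V) (U : ℕ → V) (η : ℕ → ℝ) (hη : ∀ ℓ, 0 ≤ η ℓ)
    (ℓ₀ : ℕ) (ε qest Cest Crel lam δ : ℝ)
    (hε0 : 0 < ε) (hε1 : ε < 1) (hqest0 : 0 < qest) (hqest1 : qest < 1)
    (hCest : 0 < Cest) (hCrel : 0 < Crel) (hlam : 0 < lam) (hδ : 0 < δ)
    (hlamCest : lam * Cest ≤ 1)
    (hi : ∀ ℓ, ℓ₀ ≤ ℓ →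
      ‖u - U (ℓ + 1)‖ ^ 2 + ‖U (ℓ + 1) - U ℓ‖ ^ 2 ≤ (1 - ε)⁻¹ * ‖u - U ℓ‖ ^ 2)
    (hii : ∀ ℓ, ℓ₀ ≤ ℓ →
      η (ℓ + 1) ^ 2 ≤ qest * η ℓ ^ 2 + Cest * ‖U (ℓ + 1) - U ℓ‖ ^ 2)
    (hiii : ∀ ℓ, ℓ₀ ≤ ℓ → ‖u - U ℓ‖ ≤ Crel * η ℓ)
    (h1 : qest + Crel ^ 2 * δ < 1) (h2 : (1 - ε)⁻¹ - δ * lam < 1) :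
    ∀ ℓ, ℓ₀ ≤ ℓ →
      Real.sqrt (‖u - U (ℓ + 1)‖ ^ 2 + lam * η (ℓ + 1) ^ 2)
        ≤ Real.sqrt (max ((1 - ε)⁻¹ - δ * lam) (qest + Crel ^ 2 * δ))
          * Real.sqrt (‖u - U ℓ‖ ^ 2 + lam * η ℓ ^ 2) := by
  intro ℓ hℓ
  set M := max ((1 - ε)⁻¹ - δ * lam) (qest + Crel ^ 2 * δ) with hM
  have hM0 : 0 ≤ M := le_max_of_le_right (by positivity)
  have key : ‖u - U (ℓ + 1)‖ ^ 2 + lam * η (ℓ + 1) ^ 2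
      ≤ M * (‖u - U ℓ‖ ^ 2 + lam * η ℓ ^ 2) := by
    have hA := hi ℓ hℓ
    have hB := hii ℓ hℓ
    have hC := hiii ℓ hℓ
    have h3sq : ‖u - U ℓ‖ ^ 2 ≤ Crel ^ 2 * η ℓ ^ 2 := by
      nlinarith [norm_nonneg (u - U ℓ), hη ℓ]
    have hmax1 : (1 - ε)⁻¹ - δ * lam ≤ M := le_max_left _ _
    have hmax2 : qest + Crel ^ 2 * δ ≤ M := le_max_right _ _
    nlinarith [sq_nonneg ‖U (ℓ + 1) - U ℓ‖, sq_nonneg ‖u - U ℓ‖, sq_nonneg (η ℓ),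
      mul_le_mul_of_nonneg_left hB hlam.le,
      mul_le_mul_of_nonneg_right hmax1 (sq_nonneg ‖u - U ℓ‖),
      mul_le_mul_of_nonneg_right hmax2 (mul_nonneg hlam.le (sq_nonneg (η ℓ))),
      mul_le_mul_of_nonneg_left h3sq (mul_nonneg hδ.le hlam.le)]
  calc Real.sqrt (‖u - U (ℓ + 1)‖ ^ 2 + lam * η (ℓ + 1) ^ 2)
      ≤ Real.sqrt (M * (‖u - U ℓ‖ ^ 2 + lam * η ℓ ^ 2)) := Real.sqrt_le_sqrt key
    _ = Real.sqrt M * Real.sqrt (‖u - U ℓ‖ ^ 2 + lam * η ℓ ^ 2) := Real.sqrt_mul hM0 _
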